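/- (Separable ball around the maximally mixed two-qubit state, PPT form) For any density matrix σ on ℂ² ⊗ ℂ² and any 0 ≤ p ≤ 1/3, the state ρ = p σ + (1−p)·I/4 has positive semidefinite partial transpose. -/

import Mathlib

set_option maxHeartbeats 1600000

open Matrix
open scoped ComplexOrder

/-- Partial transposition on the second factor of a bipartite matrix. -/
noncomputable def ptB {m n : ℕ}
    (M : Matrix (Fin m × Fin n) (Fin m × Fin n) ℂ) :
    Matrix (Fin m × Fin n) (Fin m × Fin n) ℂ :=
  fun p q => M (p.1, q.2) (q.1, p.2)

namespace PPTBall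

open Complex

noncomputable def Gm (v x : Fin 2 × Fin 2 → ℂ) (m n : Fin 2) : ℂ :=
  ∑ i : Fin 2, v (i, m) * x (i, n)

lemma cauchy2 (a₁ a₂ b₁ b₂ : ℂ) :
    Complex.normSq (a₁ * b₁ + a₂ * b₂) ≤
      (normSq a₁ + normSq a₂) * (normSq b₁ + normSq b₂) := by
  have h : (normSq a₁ + normSq a₂) * (normSq b₁ + normSq b₂)
      - normSq (a₁ * b₁ + a₂ * b₂)
      = normSq (a₁ * (starRingEnd ℂ) b₂ - a₂ * (starRingEnd ℂ) b₁) := by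
    simp only [Complex.normSq_apply, Complex.mul_re, Complex.mul_im, Complex.add_re,
      Complex.add_im, Complex.sub_re, Complex.sub_im, Complex.conj_re, Complex.conj_im]
    ring
  nlinarith [Complex.normSq_nonneg (a₁ * (starRingEnd ℂ) b₂ - a₂ * (starRingEnd ℂ) b₁)]

lemma real_key (A B C D t g00 g11 : ℝ) (hA0 : 0 ≤ A) (hB0 : 0 ≤ B) (hC0 : 0 ≤ C)
    (hD0 : 0 ≤ D) (hg00 : 0 ≤ g00) (hg11 : 0 ≤ g11)
    (hu : t ^ 2 ≤ B * C * (A * D)) :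
    -(1/2 * ((A + B) * (C + D))) ≤ g00 + g11 + 2 * t := by
  have hABCD : B * C * (A * D) ≤ ((A + B) * (C + D) / 4) ^ 2 := by
    nlinarith [mul_nonneg (sq_nonneg (A - B)) (sq_nonneg (C + D)),
      mul_nonneg (mul_nonneg hA0 hB0) (sq_nonneg (C - D))]
  have hu0 : 0 ≤ (A + B) * (C + D) / 4 := by positivity
  have hlow : -((A + B) * (C + D) / 4) ≤ t := by
    nlinarith [sq_nonneg (t + (A + B) * (C + D) / 4)]
  linarith

lemma row_im (v x : Fin 2 × Fin 2 → ℂ) :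
    (∑ m : Fin 2, ∑ n : Fin 2, (starRingEnd ℂ) (Gm v x n m) * Gm v x m n).im = 0 := by
  simp only [Fin.sum_univ_two, Complex.add_im, Complex.mul_im, Complex.conj_re,
    Complex.conj_im]
  ring

lemma row_re (v x : Fin 2 × Fin 2 → ℂ) :
    -(1/2 * ((∑ a : Fin 2 × Fin 2, normSq (v a)) * (∑ a : Fin 2 × Fin 2, normSq (x a))))
      ≤ (∑ m : Fin 2, ∑ n : Fin 2, (starRingEnd ℂ) (Gm v x n m) * Gm v x m n).re := by
  have hsum_v : (∑ a : Fin 2 × Fin 2, normSq (v a))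
      = (normSq (v (0,0)) + normSq (v (1,0))) + (normSq (v (0,1)) + normSq (v (1,1))) := by
    rw [Fintype.sum_prod_type]
    simp only [Fin.sum_univ_two]; ring
  have hsum_x : (∑ a : Fin 2 × Fin 2, normSq (x a))
      = (normSq (x (0,0)) + normSq (x (1,0))) + (normSq (x (0,1)) + normSq (x (1,1))) := by
    rw [Fintype.sum_prod_type]
    simp only [Fin.sum_univ_two]; ring
  have hP : normSq (Gm v x 0 1)
      ≤ (normSq (v (0,0)) + normSq (v (1,0))) * (normSq (x (0,1)) + normSq (x (1,1))) := by
    have := cauchy2 (v (0,0)) (v (1,0)) (x (0,1)) (x (1,1))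
    simpa [Gm, Fin.sum_univ_two] using this
  have hQ : normSq (Gm v x 1 0)
      ≤ (normSq (v (0,1)) + normSq (v (1,1))) * (normSq (x (0,0)) + normSq (x (1,0))) := by
    have := cauchy2 (v (0,1)) (v (1,1)) (x (0,0)) (x (1,0))
    simpa [Gm, Fin.sum_univ_two] using this
  have ht2 : ((starRingEnd ℂ) (Gm v x 1 0) * Gm v x 0 1).re ^ 2
      ≤ normSq (Gm v x 1 0) * normSq (Gm v x 0 1) := by
    have h1 : normSq ((starRingEnd ℂ) (Gm v x 1 0) * Gm v x 0 1)
        = normSq (Gm v x 1 0) * normSq (Gm v x 0 1) := by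
      rw [Complex.normSq_mul, Complex.normSq_conj]
    have h2 : normSq ((starRingEnd ℂ) (Gm v x 1 0) * Gm v x 0 1)
        = ((starRingEnd ℂ) (Gm v x 1 0) * Gm v x 0 1).re ^ 2
          + ((starRingEnd ℂ) (Gm v x 1 0) * Gm v x 0 1).im ^ 2 := by
      rw [Complex.normSq_apply]; ring
    nlinarith [sq_nonneg ((starRingEnd ℂ) (Gm v x 1 0) * Gm v x 0 1).im]
  have hexp : (∑ m : Fin 2, ∑ n : Fin 2, (starRingEnd ℂ) (Gm v x n m) * Gm v x m n).re
      = normSq (Gm v x 0 0) + normSq (Gm v x 1 1)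
        + 2 * ((starRingEnd ℂ) (Gm v x 1 0) * Gm v x 0 1).re := by
    simp only [Fin.sum_univ_two, Complex.add_re, Complex.mul_re, Complex.conj_re,
      Complex.conj_im, Complex.normSq_apply]
    ring
  rw [hexp, hsum_v, hsum_x]
  exact real_key _ _ _ _ _ _ _
    (add_nonneg (normSq_nonneg _) (normSq_nonneg _))
    (add_nonneg (normSq_nonneg _) (normSq_nonneg _))
    (add_nonneg (normSq_nonneg _) (normSq_nonneg _))
    (add_nonneg (normSq_nonneg _) (normSq_nonneg _))
    (normSq_nonneg _) (normSq_nonneg _)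
    (ht2.trans (mul_le_mul hQ hP (normSq_nonneg _)
      (mul_nonneg (add_nonneg (normSq_nonneg _) (normSq_nonneg _))
        (add_nonneg (normSq_nonneg _) (normSq_nonneg _)))))

lemma ptB_expand (Bm : Matrix (Fin 2 × Fin 2) (Fin 2 × Fin 2) ℂ) (x : Fin 2 × Fin 2 → ℂ) :
    star x ⬝ᵥ (ptB (Bmᴴ * Bm) *ᵥ x)
      = ∑ r : Fin 2 × Fin 2, ∑ m : Fin 2, ∑ n : Fin 2,
          (starRingEnd ℂ) (Gm (Bm r) x n m) * Gm (Bm r) x m n := by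
  simp only [dotProduct, mulVec, ptB, Matrix.mul_apply, conjTranspose_apply, Gm,
    Pi.star_apply, RCLike.star_def]
  simp only [Fintype.sum_prod_type, Fin.sum_univ_two, map_add, _root_.map_mul,
    Complex.conj_conj]
  ring

lemma trace_re (Bm : Matrix (Fin 2 × Fin 2) (Fin 2 × Fin 2) ℂ) :
    (Bmᴴ * Bm).trace.re
      = ∑ r : Fin 2 × Fin 2, ∑ a : Fin 2 × Fin 2, normSq (Bm r a) := by
  rw [Finset.sum_comm]
  simp only [Matrix.trace, Matrix.diag, Matrix.mul_apply, conjTranspose_apply,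
    RCLike.star_def, Complex.re_sum, Complex.mul_re, Complex.conj_re, Complex.conj_im,
    Complex.normSq_apply]
  congr 1; funext a; congr 1; funext r; ring

lemma ptB_one {m n : ℕ} : ptB (1 : Matrix (Fin m × Fin n) (Fin m × Fin n) ℂ) = 1 := by
  ext ⟨i, k⟩ ⟨j, l⟩
  simp only [ptB, Matrix.one_apply, Prod.mk.injEq]
  by_cases h1 : i = j <;> by_cases h2 : k = l <;> simp [h1, h2, eq_comm]

lemma ptB_isHermitian {m n : ℕ} {M : Matrix (Fin m × Fin n) (Fin m × Fin n) ℂ}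
    (h : M.IsHermitian) : (ptB M).IsHermitian := by
  ext p q
  simpa [ptB, conjTranspose_apply] using h.apply (p.1, q.2) (q.1, p.2)

end PPTBall

/-- (Separable ball around the maximally mixed two-qubit state, PPT form)
For any two-qubit density matrix `σ` and any `0 ≤ p ≤ 1/3`, the state
`ρ = p σ + (1−p)·I/4` has positive semidefinite partial transpose. -/
theorem ppt_ball_two_qubits (σ : Matrix (Fin 2 × Fin 2) (Fin 2 × Fin 2) ℂ)
    (hσ : σ.PosSemidef) (htr : σ.trace = 1)
    (p : ℝ) (hp0 : 0 ≤ p) (hp : p ≤ 1 / 3) :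
    (ptB ((p : ℂ) • σ +
      ((1 - p : ℝ) : ℂ) • ((4 : ℂ)⁻¹ •
        (1 : Matrix (Fin 2 × Fin 2) (Fin 2 × Fin 2) ℂ)))).PosSemidef := by
  obtain ⟨Bm, rfl⟩ : ∃ Bm : Matrix (Fin 2 × Fin 2) (Fin 2 × Fin 2) ℂ, σ = Bmᴴ * Bm := by
    open scoped MatrixOrder Norms.L2Operator in
    exact CStarAlgebra.nonneg_iff_eq_star_mul_self.mp hσ.nonneg
  have hlin : ptB ((p : ℂ) • (Bmᴴ * Bm) +
      ((1 - p : ℝ) : ℂ) • ((4 : ℂ)⁻¹ •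
        (1 : Matrix (Fin 2 × Fin 2) (Fin 2 × Fin 2) ℂ)))
      = (p : ℂ) • ptB (Bmᴴ * Bm) +
        ((1 - p : ℝ) : ℂ) • ((4 : ℂ)⁻¹ •
          (1 : Matrix (Fin 2 × Fin 2) (Fin 2 × Fin 2) ℂ)) := by
    have h1 : ptB ((p : ℂ) • (Bmᴴ * Bm) +
        ((1 - p : ℝ) : ℂ) • ((4 : ℂ)⁻¹ •
          (1 : Matrix (Fin 2 × Fin 2) (Fin 2 × Fin 2) ℂ)))
        = (p : ℂ) • ptB (Bmᴴ * Bm) +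
          ((1 - p : ℝ) : ℂ) • ((4 : ℂ)⁻¹ •
            ptB (1 : Matrix (Fin 2 × Fin 2) (Fin 2 × Fin 2) ℂ)) := rfl
    rw [h1, PPTBall.ptB_one]
  rw [hlin]
  refine Matrix.PosSemidef.of_dotProduct_mulVec_nonneg ?_ ?_
  · have hpt : (ptB (Bmᴴ * Bm)).IsHermitian :=
      PPTBall.ptB_isHermitian (Matrix.isHermitian_conjTranspose_mul_self Bm)
    show _ᴴ = _
    rw [Matrix.conjTranspose_add, Matrix.conjTranspose_smul, Matrix.conjTranspose_smul,
      Matrix.conjTranspose_smul, Matrix.conjTranspose_one, hpt]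
    simp [Complex.conj_ofReal]
  · intro x
    have hF := PPTBall.ptB_expand Bm x
    set F := star x ⬝ᵥ (ptB (Bmᴴ * Bm) *ᵥ x) with hFdef
    -- the quadratic form decomposes
    have hform : star x ⬝ᵥ (((p : ℂ) • ptB (Bmᴴ * Bm) +
        ((1 - p : ℝ) : ℂ) • ((4 : ℂ)⁻¹ •
          (1 : Matrix (Fin 2 × Fin 2) (Fin 2 × Fin 2) ℂ))) *ᵥ x)
        = (p : ℂ) * F + ((1 - p : ℝ) : ℂ) * ((4 : ℂ)⁻¹ * (star x ⬝ᵥ x)) := by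
      rw [Matrix.add_mulVec, Matrix.smul_mulVec, Matrix.smul_mulVec,
        Matrix.smul_mulVec, Matrix.one_mulVec, dotProduct_add,
        dotProduct_smul, dotProduct_smul, dotProduct_smul,
        smul_eq_mul, smul_eq_mul, smul_eq_mul]
    rw [hform]
    -- norm of x
    set X := ∑ a : Fin 2 × Fin 2, Complex.normSq (x a) with hXdef
    have hX : star x ⬝ᵥ x = (X : ℂ) := by
      simp only [dotProduct, Pi.star_apply, RCLike.star_def, hXdef]
      push_cast
      refine Finset.sum_congr rfl fun a _ => ?_
      rw [mul_comm, Complex.mul_conj]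
    have hX0 : 0 ≤ X := Finset.sum_nonneg fun a _ => Complex.normSq_nonneg _
    -- real and imaginary parts of F
    have hFim : F.im = 0 := by
      rw [hF, Complex.im_sum]
      exact Finset.sum_eq_zero fun r _ => PPTBall.row_im (Bm r) x
    have hFre : -(1/2 * X) ≤ F.re := by
      have h1 : F.re = ∑ r : Fin 2 × Fin 2,
          (∑ m : Fin 2, ∑ n : Fin 2,
            (starRingEnd ℂ) (PPTBall.Gm (Bm r) x n m) * PPTBall.Gm (Bm r) x m n).re := by
        rw [hF, Complex.re_sum]
      have h2 : ∀ r : Fin 2 × Fin 2,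
          -(1/2 * ((∑ a : Fin 2 × Fin 2, Complex.normSq (Bm r a)) * X))
            ≤ (∑ m : Fin 2, ∑ n : Fin 2,
              (starRingEnd ℂ) (PPTBall.Gm (Bm r) x n m) * PPTBall.Gm (Bm r) x m n).re :=
        fun r => PPTBall.row_re (Bm r) x
      have htre2 : ∑ r : Fin 2 × Fin 2, ∑ a : Fin 2 × Fin 2, Complex.normSq (Bm r a)
          = 1 := by
        have htre : (Bmᴴ * Bm).trace.re = 1 := by rw [htr]; simp
        rw [PPTBall.trace_re] at htre
        exact htre
      have h3 : ∑ r : Fin 2 × Fin 2,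
          -(1/2 * ((∑ a : Fin 2 × Fin 2, Complex.normSq (Bm r a)) * X)) = -(1/2 * X) := by
        have hcong : ∀ r : Fin 2 × Fin 2,
            -(1/2 * ((∑ a : Fin 2 × Fin 2, Complex.normSq (Bm r a)) * X))
              = (-(1/2) * X) * ∑ a : Fin 2 × Fin 2, Complex.normSq (Bm r a) :=
          fun r => by ring
        rw [Finset.sum_congr rfl fun r _ => hcong r, ← Finset.mul_sum, htre2]
        ring
      calc -(1/2 * X) = ∑ r : Fin 2 × Fin 2,
            -(1/2 * ((∑ a : Fin 2 × Fin 2, Complex.normSq (Bm r a)) * X)) := h3.symm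
        _ ≤ _ := by rw [h1]; exact Finset.sum_le_sum fun r _ => h2 r
    -- final inequality
    rw [hX]
    have hcast : ((1 - p : ℝ) : ℂ) * ((4 : ℂ)⁻¹ * (X : ℂ))
        = (((1 - p) * (X / 4) : ℝ) : ℂ) := by push_cast; ring
    rw [hcast, Complex.le_def]
    constructor
    · simp only [Complex.add_re, Complex.mul_re, Complex.ofReal_re, Complex.ofReal_im,
        Complex.zero_re, hFim]
      nlinarith [mul_le_mul_of_nonneg_left hFre hp0,
        mul_nonneg (by linarith : (0:ℝ) ≤ 1/3 - p) hX0]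
    · simp [Complex.add_im, Complex.mul_im, hFim]
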